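/- The dual of the Reed-Muller code RM(r,m) is RM(m−r−1,m), for 0 ≤ r ≤ m−1. -/
import Mathlib


/-- The Reed-Muller code `RM(r,m)`. -/
def RM (r m : ℕ) : Submodule (ZMod 2) ((Fin m → ZMod 2) → ZMod 2) :=
  Submodule.span (ZMod 2)
    {v | ∃ f : MvPolynomial (Fin m) (ZMod 2),
      f.totalDegree ≤ r ∧ v = fun x => MvPolynomial.eval x f}

open MvPolynomial Finset

lemma zmod2_pow_sum (n : ℕ) : ∑ b : ZMod 2, b ^ n = if n = 0 then 0 else 1 := by
  rcases n with _ | n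
  · decide
  · have h : (Finset.univ : Finset (ZMod 2)) = {0, 1} := by decide
    rw [h]; simp [zero_pow]

lemma prod_delta {m : ℕ} (x y : Fin m → ZMod 2) :
    ∏ i, (x i + y i + 1) = if x = y then 1 else 0 := by
  have key : ∀ a b : ZMod 2, a + b + 1 = if a = b then 1 else 0 := by decide
  simp_rw [key]
  rw [Finset.prod_boole]
  by_cases hxy : x = y
  · simp [hxy]
  · rw [if_neg, if_neg hxy]
    simp only [Finset.mem_univ, true_implies]
    exact fun hh => hxy (funext hh)

lemma RM_sum_eval_eq_zero {m : ℕ} (p : MvPolynomial (Fin m) (ZMod 2))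
    (hp : p.totalDegree < m) :
    ∑ x : Fin m → ZMod 2, MvPolynomial.eval x p = 0 := by
  simp_rw [MvPolynomial.eval_eq']
  rw [Finset.sum_comm]
  refine Finset.sum_eq_zero fun d hd => ?_
  rw [← Finset.mul_sum]
  have hcomm : ∑ x : Fin m → ZMod 2, ∏ i, x i ^ d i = ∏ i, ∑ b : ZMod 2, b ^ d i := by
    rw [Finset.prod_univ_sum, Fintype.piFinset_univ]
  rw [hcomm]
  have hex : ∃ i, d i = 0 := by
    by_contra hc
    push_neg at hc
    have h1 : (m : ℕ) ≤ ∑ i : Fin m, d i := by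
      calc m = ∑ _i : Fin m, 1 := by simp
        _ ≤ ∑ i, d i := Finset.sum_le_sum fun i _ => Nat.one_le_iff_ne_zero.2 (hc i)
    have h2 : ∑ i : Fin m, d i ≤ p.totalDegree := by
      have := MvPolynomial.le_totalDegree hd
      calc ∑ i : Fin m, d i = d.sum fun _ e => e := by
            rw [Finsupp.sum_fintype]; simp
        _ ≤ p.totalDegree := this
    omega
  obtain ⟨i, hi⟩ := hex
  rw [Finset.prod_eq_zero (Finset.mem_univ i)]
  · ring
  · rw [hi, zmod2_pow_sum]; simp

lemma sum_mul_eval_zero {m : ℕ} (p : MvPolynomial (Fin m) (ZMod 2)) (k : ℕ)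
    (hp : p.totalDegree + k < m) (u : (Fin m → ZMod 2) → ZMod 2) (hu : u ∈ RM k m) :
    ∑ x, MvPolynomial.eval x p * u x = 0 := by
  induction hu using Submodule.span_induction with
  | mem u hu =>
    obtain ⟨f, hf, rfl⟩ := hu
    have : ∀ x : Fin m → ZMod 2,
        MvPolynomial.eval x p * MvPolynomial.eval x f = MvPolynomial.eval x (p * f) := by
      intro x; rw [map_mul]
    simp_rw [this]
    apply RM_sum_eval_eq_zero
    calc (p * f).totalDegree ≤ p.totalDegree + f.totalDegree := totalDegree_mul ..
      _ ≤ p.totalDegree + k := by omega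
      _ < m := hp
  | zero => simp
  | add a b _ _ ha hb => simp [mul_add, Finset.sum_add_distrib, ha, hb]
  | smul c a _ ha =>
    simp only [Pi.smul_apply, smul_eq_mul, mul_left_comm, ← Finset.mul_sum, ha, mul_zero]

/-- The dual of `RM(r,m)` is `RM(m-r-1,m)` for `0 ≤ r ≤ m-1`. -/
theorem RM_dual (r m : ℕ) (h : r + 1 ≤ m) :
    {v : (Fin m → ZMod 2) → ZMod 2 | ∀ u ∈ RM r m, ∑ x, v x * u x = 0} =
      ↑(RM (m - r - 1) m) := by
  ext v
  simp only [Set.mem_setOf_eq, SetLike.mem_coe]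
  constructor
  · intro hv
    set c : Finset (Fin m) → ZMod 2 := fun S => ∑ x, v x * ∏ i ∈ Sᶜ, (x i + 1) with hc
    set g : MvPolynomial (Fin m) (ZMod 2) :=
      ∑ S : Finset (Fin m), C (c S) * ∏ i ∈ S, X i with hg
    have hcS : ∀ S : Finset (Fin m), m - r ≤ S.card → c S = 0 := by
      intro S hS
      have heq : c S = ∑ x, v x * MvPolynomial.eval x (∏ i ∈ Sᶜ, (X i + 1)) := by
        simp [hc]
      rw [heq]
      apply hv
      apply Submodule.subset_span
      refine ⟨∏ i ∈ Sᶜ, (X i + 1), ?_, rfl⟩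
      have hcard : S.card ≤ m := by
        simpa using Finset.card_le_card (Finset.subset_univ S)
      calc (∏ i ∈ Sᶜ, (X i + 1 : MvPolynomial (Fin m) (ZMod 2))).totalDegree
          ≤ ∑ i ∈ Sᶜ, (X i + 1 : MvPolynomial (Fin m) (ZMod 2)).totalDegree :=
            totalDegree_finset_prod _ _
        _ ≤ ∑ _i ∈ Sᶜ, 1 := Finset.sum_le_sum fun i _ => by
            refine (totalDegree_add _ _).trans ?_
            simp [totalDegree_X]
        _ = Sᶜ.card := by simp
        _ ≤ r := by
            rw [Finset.card_compl]
            simp only [Fintype.card_fin]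
            omega
    have hdeg : g.totalDegree ≤ m - r - 1 := by
      refine (totalDegree_finset_sum _ _).trans ?_
      apply Finset.sup_le
      intro S _
      by_cases hS : m - r ≤ S.card
      · rw [hcS S hS]; simp
      · push_neg at hS
        calc (C (c S) * ∏ i ∈ S, X i).totalDegree
            ≤ (C (c S) : MvPolynomial (Fin m) (ZMod 2)).totalDegree
              + (∏ i ∈ S, X i : MvPolynomial (Fin m) (ZMod 2)).totalDegree :=
              totalDegree_mul _ _
          _ ≤ 0 + S.card := by
              refine add_le_add (le_of_eq (totalDegree_C _)) ?_
              refine (totalDegree_finset_prod _ _).trans ?_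
              refine (Finset.sum_le_sum fun i _ => le_of_eq (totalDegree_X i)).trans ?_
              simp
          _ ≤ m - r - 1 := by omega
    have hveq : v = fun x => MvPolynomial.eval x g := by
      funext y
      have hEval : MvPolynomial.eval y g = ∑ S : Finset (Fin m), c S * ∏ i ∈ S, y i := by
        simp [hg]
      rw [hEval]
      have expand : ∀ x : Fin m → ZMod 2,
          ∑ S : Finset (Fin m), (∏ i ∈ Sᶜ, (x i + 1)) * ∏ i ∈ S, y i
            = if x = y then 1 else 0 := by
        intro x
        have hpa := Finset.prod_add (fun i => y i) (fun i => x i + 1) (Finset.univ : Finset (Fin m))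
        rw [Finset.powerset_univ] at hpa
        have h2 : ∏ i, (y i + (x i + 1)) = if x = y then 1 else 0 := by
          rw [← prod_delta x y]
          exact Finset.prod_congr rfl fun i _ => by ring
        rw [← h2, hpa]
        refine Finset.sum_congr rfl fun S _ => ?_
        rw [← Finset.compl_eq_univ_sdiff, mul_comm]
      calc v y = ∑ x, v x * (if x = y then 1 else 0) := by
            simp [mul_ite]
        _ = ∑ x, v x * ∑ S : Finset (Fin m), (∏ i ∈ Sᶜ, (x i + 1)) * ∏ i ∈ S, y i := by
            refine Finset.sum_congr rfl fun x _ => ?_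
            rw [expand x]
        _ = ∑ S : Finset (Fin m), c S * ∏ i ∈ S, y i := by
            simp_rw [Finset.mul_sum, hc, Finset.sum_mul]
            rw [Finset.sum_comm]
            refine Finset.sum_congr rfl fun S _ => Finset.sum_congr rfl fun x _ => by ring
    rw [hveq]
    exact Submodule.subset_span ⟨g, hdeg, rfl⟩
  · intro hv u hu
    induction hv using Submodule.span_induction with
    | mem w hw =>
      obtain ⟨gp, hgp, rfl⟩ := hw
      exact sum_mul_eval_zero gp r (by omega) u hu
    | zero => simp
    | add a b _ _ ha hb => simp [add_mul, Finset.sum_add_distrib, ha, hb]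
    | smul cc a _ ha =>
      simp only [Pi.smul_apply, smul_eq_mul, mul_assoc, ← Finset.mul_sum, ha, mul_zero]
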